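/- Let p > 3 be a prime and let G = Φ₃₅(1⁶) be the group of order p⁶ with presentation on generators α, α₁, α₂, α₃, α₄, α₅ and relations [αᵢ,α] = αᵢ₊₁ for i = 1,2,3,4, αᵖ = 1, and αⱼ^(p) = 1 for j = 1,…,5, where αⱼ^(p) denotes αⱼᵖ·αⱼ₊₁^C(p,2)·αⱼ₊₂^C(p,3)·⋯·α₅^C(p,6−j); every commutator of a pair of generators not listed among these relations is declared trivial. Then the Bogomolov multiplier B₀(G) is trivial. -/

import Mathlib

/-!
Φ₃₅(1⁶): relations [αᵢ,α]=αᵢ₊₁ (i=1..4), αᵖ=1, αⱼ^(p)=1 (j=1..5).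
-/

namespace Stmt11

/-- The additive group `ℚ/ℤ`. -/
abbrev QZ : Type := ℚ ⧸ AddSubgroup.zmultiples (1 : ℚ)

/-- An inhomogeneous 2-cocycle on `G` with values in `ℚ/ℤ` (trivial `G`-action). -/
def IsTwoCocycle {G : Type} [Group G] (f : G → G → QZ) : Prop :=
  ∀ g h j : G, f h j - f (g * h) j + f g (h * j) - f g h = 0

/-- An inhomogeneous 2-coboundary on `G` with values in `ℚ/ℤ` (trivial `G`-action). -/
def IsTwoCoboundary {G : Type} [Group G] (f : G → G → QZ) : Prop :=
  ∃ c : G → QZ, ∀ g h : G, f g h = c h - c (g * h) + c g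

/-- A subgroup is bicyclic if it is abelian and generated by at most two elements
(equivalently, cyclic or a direct product of two cyclic groups). -/
def IsBicyclic {G : Type} [Group G] (A : Subgroup G) : Prop :=
  (∀ x y : A, x * y = y * x) ∧ ∃ a b : G, A = Subgroup.closure {a, b}

/-- The Bogomolov multiplier `B₀(G) ⊆ H²(G, ℚ/ℤ)` is trivial, phrased at the level of
2-cocycles: every 2-cocycle whose restriction to each bicyclic subgroup is a coboundary
(i.e. whose class restricts to zero on each bicyclic subgroup) is itself a coboundary
(i.e. its class is zero). -/
def BogomolovMultiplierIsTrivial (G : Type) [Group G] : Prop :=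
  ∀ f : G → G → QZ, IsTwoCocycle f →
    (∀ A : Subgroup G, IsBicyclic A → IsTwoCoboundary (fun a b : ↥A => f ↑a ↑b)) →
    IsTwoCoboundary f

/-- The Bogomolov multiplier `B₀(G) ⊆ H²(G, ℚ/ℤ)` is nontrivial, phrased at the level of
2-cocycles. -/
def BogomolovMultiplierIsNontrivial (G : Type) [Group G] : Prop :=
  ∃ f : G → G → QZ, IsTwoCocycle f ∧
    (∀ A : Subgroup G, IsBicyclic A → IsTwoCoboundary (fun a b : ↥A => f ↑a ↑b)) ∧
    ¬ IsTwoCoboundary f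

/-- The generators. -/
inductive Gen | a | a1 | a2 | a3 | a4 | a5

open FreeGroup

/-- The commutator `[x,y] = x⁻¹y⁻¹xy`. -/
def c (x y : FreeGroup Gen) : FreeGroup Gen := x⁻¹ * y⁻¹ * x * y

/-- The defining relators. -/
def rels (p : ℕ) : Set (FreeGroup Gen) :=
  { c (of .a1) (of .a) * (of Gen.a2)⁻¹,
    c (of .a2) (of .a) * (of Gen.a3)⁻¹,
    c (of .a3) (of .a) * (of Gen.a4)⁻¹,
    c (of .a4) (of .a) * (of Gen.a5)⁻¹,
    c (of .a) (of .a5),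
    c (of .a1) (of .a2),
    c (of .a1) (of .a3),
    c (of .a1) (of .a4),
    c (of .a1) (of .a5),
    c (of .a2) (of .a3),
    c (of .a2) (of .a4),
    c (of .a2) (of .a5),
    c (of .a3) (of .a4),
    c (of .a3) (of .a5),
    c (of .a4) (of .a5),
    (of Gen.a) ^ p,
    (of Gen.a1) ^ p * (of Gen.a2) ^ (p.choose 2) * (of Gen.a3) ^ (p.choose 3) * (of Gen.a4) ^ (p.choose 4) * (of Gen.a5) ^ (p.choose 5),
    (of Gen.a2) ^ p * (of Gen.a3) ^ (p.choose 2) * (of Gen.a4) ^ (p.choose 3) * (of Gen.a5) ^ (p.choose 4),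
    (of Gen.a3) ^ p * (of Gen.a4) ^ (p.choose 2) * (of Gen.a5) ^ (p.choose 3),
    (of Gen.a4) ^ p * (of Gen.a5) ^ (p.choose 2),
    (of Gen.a5) ^ p }

section CocycleBasics

variable {G : Type} [Group G]

theorem cocycle_one_left {f : G → G → QZ} (hf : IsTwoCocycle f) (g : G) : f 1 g = f 1 1 := by
  have h := hf 1 1 g
  simp only [one_mul] at h
  have h2 : f 1 g - f 1 1 = 0 := by rw [← h]; abel
  exact sub_eq_zero.mp h2

theorem cocycle_one_right {f : G → G → QZ} (hf : IsTwoCocycle f) (g : G) : f g 1 = f 1 1 := by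
  have h := hf g 1 1
  simp only [one_mul, mul_one] at h
  have h2 : f 1 1 - f g 1 = 0 := by rw [← h]; abel
  exact (sub_eq_zero.mp h2).symm

theorem cocycle_inv {f : G → G → QZ} (hf : IsTwoCocycle f) (g : G) : f g⁻¹ g = f g g⁻¹ := by
  have h := hf g g⁻¹ g
  rw [mul_inv_cancel, inv_mul_cancel, cocycle_one_left hf g, cocycle_one_right hf g] at h
  have h2 : f g⁻¹ g - f g g⁻¹ = 0 := by rw [← h]; abel
  exact sub_eq_zero.mp h2

theorem cocycle_rearrange {f : G → G → QZ} (hf : IsTwoCocycle f) (g h j : G) :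
    f g h + f (g * h) j = f h j + f g (h * j) := by
  apply eq_of_sub_eq_zero
  have e : f g h + f (g * h) j - (f h j + f g (h * j))
      = -(f h j - f (g * h) j + f g (h * j) - f g h) := by abel
  rw [e, hf g h j, neg_zero]

end CocycleBasics

section QZFacts

theorem qz_div (n : ℕ) (hn : n ≠ 0) (q : QZ) : ∃ r : QZ, n • r = q := by
  obtain ⟨x, rfl⟩ := QuotientAddGroup.mk_surjective q
  refine ⟨QuotientAddGroup.mk (x / n), ?_⟩
  rw [← QuotientAddGroup.mk_nsmul]
  congr 1
  rw [nsmul_eq_mul, mul_div_cancel₀]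
  exact_mod_cast hn

theorem qz_divz (n : ℤ) (hn : n ≠ 0) (q : QZ) : ∃ r : QZ, n • r = q := by
  obtain ⟨x, rfl⟩ := QuotientAddGroup.mk_surjective q
  refine ⟨QuotientAddGroup.mk (x / n), ?_⟩
  rw [← QuotientAddGroup.mk_zsmul]
  congr 1
  rw [zsmul_eq_mul, mul_div_cancel₀]
  exact_mod_cast hn

theorem qz_injective : Module.Injective ℤ QZ := by
  apply Module.Baer.injective
  intro I g
  obtain ⟨n, rfl⟩ := (IsPrincipalIdealRing.principal I).principal
  by_cases hn0 : n = 0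
  · subst hn0
    refine ⟨0, fun x mem => ?_⟩
    have hx : x = 0 := by simpa using (Ideal.mem_span_singleton.mp mem)
    subst hx
    have : (⟨0, mem⟩ : ↥(Ideal.span {(0:ℤ)})) = 0 := rfl
    rw [this, map_zero, map_zero]
  · obtain ⟨w, hw⟩ := qz_divz n hn0 (g ⟨n, Ideal.mem_span_singleton_self n⟩)
    refine ⟨LinearMap.toSpanSingleton ℤ QZ w, fun x mem => ?_⟩
    obtain ⟨k, rfl⟩ := Ideal.mem_span_singleton'.mp mem
    have h1 : (⟨k * n, mem⟩ : ↥(Ideal.span {n})) = k • ⟨n, Ideal.mem_span_singleton_self n⟩ :=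
      Subtype.ext (by simp [smul_eq_mul])
    rw [h1, map_smul]
    show (k * n) • w = k • g ⟨n, Ideal.mem_span_singleton_self n⟩
    rw [← hw, mul_smul]

end QZFacts


section ExtGroup

variable {G : Type} [Group G]

/-- Central extension of `G` by `QZ` determined by a normalized 2-cocycle. -/
@[ext] structure Ext (f : G → G → QZ) (hf : IsTwoCocycle f) (h0 : f 1 1 = 0) : Type where
  q : QZ
  g : G

variable {f : G → G → QZ} {hf : IsTwoCocycle f} {h0 : f 1 1 = 0}

instance : Mul (Ext f hf h0) := ⟨fun a b => ⟨a.q + b.q + f a.g b.g, a.g * b.g⟩⟩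
instance : One (Ext f hf h0) := ⟨⟨0, 1⟩⟩
instance : Inv (Ext f hf h0) := ⟨fun a => ⟨-a.q - f a.g a.g⁻¹, a.g⁻¹⟩⟩

@[simp] theorem Ext.mul_q (a b : Ext f hf h0) : (a * b).q = a.q + b.q + f a.g b.g := rfl
@[simp] theorem Ext.mul_g (a b : Ext f hf h0) : (a * b).g = a.g * b.g := rfl
@[simp] theorem Ext.one_q : (1 : Ext f hf h0).q = 0 := rfl
@[simp] theorem Ext.one_g : (1 : Ext f hf h0).g = 1 := rfl
@[simp] theorem Ext.inv_q (a : Ext f hf h0) : (a⁻¹).q = -a.q - f a.g a.g⁻¹ := rfl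
@[simp] theorem Ext.inv_g (a : Ext f hf h0) : (a⁻¹).g = a.g⁻¹ := rfl
@[simp] theorem Ext.mk_mul_mk (q r : QZ) (x y : G) :
    (Ext.mk q x * Ext.mk r y : Ext f hf h0) = Ext.mk (q + r + f x y) (x * y) := rfl
@[simp] theorem Ext.q_mk (q : QZ) (x : G) : (Ext.mk q x : Ext f hf h0).q = q := rfl
@[simp] theorem Ext.g_mk (q : QZ) (x : G) : (Ext.mk q x : Ext f hf h0).g = x := rfl

theorem f_one_left (hf : IsTwoCocycle f) (h0 : f 1 1 = 0) (x : G) : f 1 x = 0 := by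
  rw [cocycle_one_left hf x, h0]
theorem f_one_right (hf : IsTwoCocycle f) (h0 : f 1 1 = 0) (x : G) : f x 1 = 0 := by
  rw [cocycle_one_right hf x, h0]

instance : Group (Ext f hf h0) :=
  Group.ofLeftAxioms
    (by
      intro a b c
      refine Ext.ext ?_ (mul_assoc a.g b.g c.g)
      simp only [Ext.mul_q, Ext.mul_g]
      have h := cocycle_rearrange hf a.g b.g c.g
      have e : a.q + b.q + f a.g b.g + c.q + f (a.g * b.g) c.g
          = a.q + b.q + c.q + (f a.g b.g + f (a.g * b.g) c.g) := by abel
      rw [e, h]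
      abel)
    (by
      intro a
      refine Ext.ext ?_ (one_mul a.g)
      simp only [Ext.mul_q, Ext.one_q, Ext.one_g, f_one_left hf h0]
      abel)
    (by
      intro a
      refine Ext.ext ?_ (inv_mul_cancel a.g)
      simp only [Ext.mul_q, Ext.inv_q, Ext.inv_g, Ext.one_q, cocycle_inv hf a.g]
      abel)

/-- Projection to `G`. -/
def piE (f : G → G → QZ) (hf : IsTwoCocycle f) (h0 : f 1 1 = 0) : Ext f hf h0 →* G :=
  { toFun := Ext.g, map_one' := rfl, map_mul' := fun _ _ => rfl }

@[simp] theorem piE_apply (a : Ext f hf h0) : piE f hf h0 a = a.g := rfl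

/-- Central elements. -/
def zeta (f : G → G → QZ) (hf : IsTwoCocycle f) (h0 : f 1 1 = 0) (q : QZ) : Ext f hf h0 :=
  ⟨q, 1⟩

@[simp] theorem zeta_q (q : QZ) : (zeta f hf h0 q).q = q := rfl
@[simp] theorem zeta_g (q : QZ) : (zeta f hf h0 q).g = 1 := rfl

theorem zeta_mul (q r : QZ) : zeta f hf h0 q * zeta f hf h0 r = zeta f hf h0 (q + r) := by
  refine Ext.ext ?_ (one_mul 1)
  simp [zeta, h0]

@[simp] theorem zeta_zero : zeta f hf h0 0 = 1 := rfl

theorem zeta_comm (q : QZ) (e : Ext f hf h0) : zeta f hf h0 q * e = e * zeta f hf h0 q := by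
  refine Ext.ext ?_ ?_
  · simp only [Ext.mul_q, zeta_q, zeta_g, f_one_left hf h0, f_one_right hf h0]
    abel
  · simp [zeta]

theorem zeta_pow (q : QZ) (n : ℕ) : (zeta f hf h0 q) ^ n = zeta f hf h0 (n • q) := by
  induction n with
  | zero => simp
  | succ n ih => rw [pow_succ, ih, zeta_mul, succ_nsmul]

theorem zeta_inv (q : QZ) : (zeta f hf h0 q)⁻¹ = zeta f hf h0 (-q) := by
  refine Ext.ext ?_ ?_
  · simp [zeta, h0]
  · simp [zeta]

theorem eq_zeta_of_g_eq_one (e : Ext f hf h0) (h : e.g = 1) : e = zeta f hf h0 e.q := by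
  refine Ext.ext rfl h

theorem zmul_mul (a b : Ext f hf h0) (q r : QZ) :
    (a * zeta f hf h0 q) * (b * zeta f hf h0 r) = (a * b) * zeta f hf h0 (q + r) := by
  calc (a * zeta f hf h0 q) * (b * zeta f hf h0 r)
      = a * (zeta f hf h0 q * b) * zeta f hf h0 r := by group
    _ = a * (b * zeta f hf h0 q) * zeta f hf h0 r := by rw [zeta_comm]
    _ = (a * b) * (zeta f hf h0 q * zeta f hf h0 r) := by group
    _ = (a * b) * zeta f hf h0 (q + r) := by rw [zeta_mul]

theorem zmul_inv (a : Ext f hf h0) (q : QZ) :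
    (a * zeta f hf h0 q)⁻¹ = a⁻¹ * zeta f hf h0 (-q) := by
  rw [mul_inv_rev, zeta_inv]
  exact zeta_comm (-q) a⁻¹

theorem zmul_pow (a : Ext f hf h0) (q : QZ) (n : ℕ) :
    (a * zeta f hf h0 q) ^ n = a ^ n * zeta f hf h0 (n • q) := by
  rw [Commute.mul_pow ((zeta_comm q a).symm), zeta_pow]

/-- A group-theoretic section gives a coboundary. -/
theorem coboundary_of_section (ρ : G →* Ext f hf h0) (hρ : ∀ x : G, (ρ x).g = x) :
    IsTwoCoboundary f := by
  refine ⟨fun x => -(ρ x).q, fun g h => ?_⟩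
  have h1 : (ρ g * ρ h).q = (ρ (g * h)).q := congrArg Ext.q (map_mul ρ g h).symm
  simp only [Ext.mul_q, hρ] at h1
  simp only []
  rw [← h1]
  abel

/-- Commutative case. -/
def extCommGroup (hcomm : ∀ a b : G, a * b = b * a) (hsym : ∀ a b : G, f a b = f b a) :
    CommGroup (Ext f hf h0) :=
  { (inferInstance : Group (Ext f hf h0)) with
    mul_comm := fun a b => by
      refine Ext.ext ?_ (hcomm a.g b.g)
      simp only [Ext.mul_q, hsym a.g b.g]
      abel }

/-- Key cocycle computation for the fixed generator. -/
theorem conj_q_zero {f : G → G → QZ} (hf : IsTwoCocycle f) (h0 : f 1 1 = 0) (t x : G)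
    (hcomm : t * x = x * t) (hsym : f t x = f x t) :
    f t⁻¹ x + f (t⁻¹ * x) t = f t t⁻¹ := by
  have c1 := cocycle_rearrange hf t⁻¹ x t
  have c2 := cocycle_rearrange hf t⁻¹ t x
  rw [inv_mul_cancel, f_one_left hf h0, add_zero] at c2
  rw [hcomm] at c2
  rw [c1, ← hsym, ← cocycle_inv hf t]
  exact c2.symm

end ExtGroup

section Symmetric

/-- A symmetric cocycle on a commutative group with values in `ℚ/ℤ` is a coboundary. -/
theorem symm_cocycle_coboundary {G : Type} [Group G] (hcomm : ∀ a b : G, a * b = b * a)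
    {f : G → G → QZ} (hf : IsTwoCocycle f) (hsym : ∀ a b : G, f a b = f b a) :
    IsTwoCoboundary f := by
  have hf' : IsTwoCocycle (fun a b => f a b - f 1 1) := by
    intro g h j
    have e : (f h j - f 1 1) - (f (g * h) j - f 1 1) + (f g (h * j) - f 1 1) - (f g h - f 1 1)
        = f h j - f (g * h) j + f g (h * j) - f g h := by abel
    simpa only [e] using hf g h j
  have h0' : (fun (a b : G) => f a b - f 1 1) 1 1 = 0 := sub_self _
  letI : CommGroup (Ext _ hf' h0') :=
    extCommGroup hcomm (fun a b => by simp only [hsym a b])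
  set ι : QZ →+ Additive (Ext _ hf' h0') :=
    AddMonoidHom.mk' (fun q => Additive.ofMul (zeta _ hf' h0' q))
      (fun q r => by
        change Additive.ofMul (zeta _ hf' h0' (q + r))
            = Additive.ofMul (zeta _ hf' h0' q * zeta _ hf' h0' r)
        rw [zeta_mul]) with hι
  have hinj : Function.Injective ι := by
    intro q r h
    have := congrArg (fun e => (Additive.toMul e).q) h
    simpa [hι] using this
  obtain ⟨r, hr⟩ := qz_injective.out ι.toIntLinearMap hinj LinearMap.id
  have hrι : ∀ q : QZ, r (Additive.ofMul (zeta _ hf' h0' q)) = q := by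
    intro q
    have := hr q
    simp at this
    exact this
  refine ⟨fun x => r (Additive.ofMul (⟨0, x⟩ : Ext _ hf' h0')) + f 1 1, fun g h => ?_⟩
  have key : (⟨0, g⟩ : Ext _ hf' h0') * ⟨0, h⟩
      = zeta _ hf' h0' (f g h - f 1 1) * ⟨0, g * h⟩ := by
    refine Ext.ext ?_ ?_
    · show (0 : QZ) + 0 + (f g h - f 1 1) = (f g h - f 1 1) + 0 + (f 1 (g * h) - f 1 1)
      rw [cocycle_one_left hf (g*h)]
      abel
    · show g * h = 1 * (g * h)
      rw [one_mul]
  have k4 : r (Additive.ofMul (⟨0, g⟩ : Ext _ hf' h0')) + r (Additive.ofMul (⟨0, h⟩ : Ext _ hf' h0'))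
      = (f g h - f 1 1) + r (Additive.ofMul (⟨0, g * h⟩ : Ext _ hf' h0')) := by
    have k2 := congrArg (fun e : Ext _ hf' h0' => r (Additive.ofMul e)) key
    simp only [ofMul_mul, map_add, hrι] at k2
    erw [map_add, map_add, hrι] at k2
    exact k2
  have k5 : f g h = r (Additive.ofMul (⟨0, g⟩ : Ext _ hf' h0'))
      + r (Additive.ofMul (⟨0, h⟩ : Ext _ hf' h0'))
      - r (Additive.ofMul (⟨0, g * h⟩ : Ext _ hf' h0')) + f 1 1 := by
    rw [k4]; abel
  rw [k5]; beta_reduce; abel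

end Symmetric

section Antisym

variable {G : Type} [Group G]

theorem antisym {f : G → G → QZ} (hf : IsTwoCocycle f)
    (hb : ∀ A : Subgroup G, IsBicyclic A → IsTwoCoboundary (fun a b : ↥A => f ↑a ↑b))
    {x y : G} (h : x * y = y * x) : f x y = f y x := by
  set A : Subgroup G := Subgroup.closure {x, y} with hA
  have hScomm : ∀ a ∈ ({x, y} : Set G), ∀ b ∈ ({x, y} : Set G), a * b = b * a := by
    rintro a (rfl | rfl) b (rfl | rfl) <;> first | rfl | exact h | exact h.symm
  have hAcomm : ∀ u v : ↥A, u * v = v * u := by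
    rintro ⟨u, hu⟩ ⟨v, hv⟩
    have h1 := Subgroup.closure_le_centralizer_centralizer ({x, y} : Set G)
    exact Subtype.ext <|
      Set.centralizer_centralizer_comm_of_comm hScomm u (h1 hu) v (h1 hv)
  have hbA : IsBicyclic A := ⟨hAcomm, x, y, rfl⟩
  obtain ⟨c, hc⟩ := hb A hbA
  have hx : x ∈ A := Subgroup.subset_closure (by simp)
  have hy : y ∈ A := Subgroup.subset_closure (by simp)
  have e1 := hc ⟨x, hx⟩ ⟨y, hy⟩
  have e2 := hc ⟨y, hy⟩ ⟨x, hx⟩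
  have e3 : (⟨x, hx⟩ * ⟨y, hy⟩ : ↥A) = ⟨y, hy⟩ * ⟨x, hx⟩ := Subtype.ext h
  rw [e3] at e1
  simp only [] at e1 e2
  rw [e1, e2]
  abel

end Antisym

section GroupHelpers

variable {H : Type} [Group H]

theorem comm_of_commutator {x y : H} (h : x⁻¹ * y⁻¹ * x * y = 1) : x * y = y * x := by
  have h2 := congrArg (fun z => (y * x) * z) h
  simp only [mul_one] at h2
  rw [← h2]
  group

end GroupHelpers

section Pfacts

variable (p : ℕ)

local notation "T°" => (PresentedGroup.of Gen.a : PresentedGroup (rels p))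
local notation "X1" => (PresentedGroup.of Gen.a1 : PresentedGroup (rels p))
local notation "X2" => (PresentedGroup.of Gen.a2 : PresentedGroup (rels p))
local notation "X3" => (PresentedGroup.of Gen.a3 : PresentedGroup (rels p))
local notation "X4" => (PresentedGroup.of Gen.a4 : PresentedGroup (rels p))
local notation "X5" => (PresentedGroup.of Gen.a5 : PresentedGroup (rels p))

theorem rel_eq_one {r : FreeGroup Gen} (hr : r ∈ rels p) :
    PresentedGroup.mk (rels p) r = 1 :=
  (QuotientGroup.eq_one_iff r).mpr (Subgroup.subset_normalClosure hr)

@[simp] theorem mk_of (g : Gen) :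
    PresentedGroup.mk (rels p) (FreeGroup.of g) = PresentedGroup.of g := rfl

theorem R1 : T°⁻¹ * X1 * T° = X1 * X2 := by
  have h := rel_eq_one p (r := c (.of .a1) (.of .a) * (.of Gen.a2)⁻¹) (show _ ∈ rels p from Set.mem_insert _ _)
  simp only [c, _root_.map_mul, _root_.map_inv, mk_of] at h
  have h2 := mul_inv_eq_one.mp h
  rw [← h2]; group

theorem R2 : T°⁻¹ * X2 * T° = X2 * X3 := by
  have h := rel_eq_one p (r := c (.of .a2) (.of .a) * (.of Gen.a3)⁻¹) (show _ ∈ rels p from Set.mem_insert_of_mem _ (Set.mem_insert _ _))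
  simp only [c, _root_.map_mul, _root_.map_inv, mk_of] at h
  have h2 := mul_inv_eq_one.mp h
  rw [← h2]; group

theorem R3 : T°⁻¹ * X3 * T° = X3 * X4 := by
  have h := rel_eq_one p (r := c (.of .a3) (.of .a) * (.of Gen.a4)⁻¹) (show _ ∈ rels p from Set.mem_insert_of_mem _ (Set.mem_insert_of_mem _ (Set.mem_insert _ _)))
  simp only [c, _root_.map_mul, _root_.map_inv, mk_of] at h
  have h2 := mul_inv_eq_one.mp h
  rw [← h2]; group

theorem R4 : T°⁻¹ * X4 * T° = X4 * X5 := by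
  have h := rel_eq_one p (r := c (.of .a4) (.of .a) * (.of Gen.a5)⁻¹) (show _ ∈ rels p from Set.mem_insert_of_mem _ (Set.mem_insert_of_mem _ (Set.mem_insert_of_mem _ (Set.mem_insert _ _))))
  simp only [c, _root_.map_mul, _root_.map_inv, mk_of] at h
  have h2 := mul_inv_eq_one.mp h
  rw [← h2]; group

theorem Rt5 : T° * X5 = X5 * T° := by
  have h := rel_eq_one p (r := c (.of .a) (.of .a5)) (show _ ∈ rels p from Set.mem_insert_of_mem _ (Set.mem_insert_of_mem _ (Set.mem_insert_of_mem _ (Set.mem_insert_of_mem _ (Set.mem_insert _ _)))))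
  simp only [c, _root_.map_mul, _root_.map_inv, mk_of] at h
  exact comm_of_commutator h

theorem R12 : X1 * X2 = X2 * X1 := by
  have h := rel_eq_one p (r := c (.of .a1) (.of .a2)) (show _ ∈ rels p from Set.mem_insert_of_mem _ (Set.mem_insert_of_mem _ (Set.mem_insert_of_mem _ (Set.mem_insert_of_mem _ (Set.mem_insert_of_mem _ (Set.mem_insert _ _))))))
  simp only [c, _root_.map_mul, _root_.map_inv, mk_of] at h
  exact comm_of_commutator h

theorem R13 : X1 * X3 = X3 * X1 := by
  have h := rel_eq_one p (r := c (.of .a1) (.of .a3)) (show _ ∈ rels p from Set.mem_insert_of_mem _ (Set.mem_insert_of_mem _ (Set.mem_insert_of_mem _ (Set.mem_insert_of_mem _ (Set.mem_insert_of_mem _ (Set.mem_insert_of_mem _ (Set.mem_insert _ _)))))))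
  simp only [c, _root_.map_mul, _root_.map_inv, mk_of] at h
  exact comm_of_commutator h

theorem R14 : X1 * X4 = X4 * X1 := by
  have h := rel_eq_one p (r := c (.of .a1) (.of .a4)) (show _ ∈ rels p from Set.mem_insert_of_mem _ (Set.mem_insert_of_mem _ (Set.mem_insert_of_mem _ (Set.mem_insert_of_mem _ (Set.mem_insert_of_mem _ (Set.mem_insert_of_mem _ (Set.mem_insert_of_mem _ (Set.mem_insert _ _))))))))
  simp only [c, _root_.map_mul, _root_.map_inv, mk_of] at h
  exact comm_of_commutator h

theorem R15 : X1 * X5 = X5 * X1 := by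
  have h := rel_eq_one p (r := c (.of .a1) (.of .a5)) (show _ ∈ rels p from Set.mem_insert_of_mem _ (Set.mem_insert_of_mem _ (Set.mem_insert_of_mem _ (Set.mem_insert_of_mem _ (Set.mem_insert_of_mem _ (Set.mem_insert_of_mem _ (Set.mem_insert_of_mem _ (Set.mem_insert_of_mem _ (Set.mem_insert _ _)))))))))
  simp only [c, _root_.map_mul, _root_.map_inv, mk_of] at h
  exact comm_of_commutator h

theorem R23 : X2 * X3 = X3 * X2 := by
  have h := rel_eq_one p (r := c (.of .a2) (.of .a3)) (show _ ∈ rels p from Set.mem_insert_of_mem _ (Set.mem_insert_of_mem _ (Set.mem_insert_of_mem _ (Set.mem_insert_of_mem _ (Set.mem_insert_of_mem _ (Set.mem_insert_of_mem _ (Set.mem_insert_of_mem _ (Set.mem_insert_of_mem _ (Set.mem_insert_of_mem _ (Set.mem_insert _ _))))))))))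
  simp only [c, _root_.map_mul, _root_.map_inv, mk_of] at h
  exact comm_of_commutator h

theorem R24 : X2 * X4 = X4 * X2 := by
  have h := rel_eq_one p (r := c (.of .a2) (.of .a4)) (show _ ∈ rels p from Set.mem_insert_of_mem _ (Set.mem_insert_of_mem _ (Set.mem_insert_of_mem _ (Set.mem_insert_of_mem _ (Set.mem_insert_of_mem _ (Set.mem_insert_of_mem _ (Set.mem_insert_of_mem _ (Set.mem_insert_of_mem _ (Set.mem_insert_of_mem _ (Set.mem_insert_of_mem _ (Set.mem_insert _ _)))))))))))
  simp only [c, _root_.map_mul, _root_.map_inv, mk_of] at h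
  exact comm_of_commutator h

theorem R25 : X2 * X5 = X5 * X2 := by
  have h := rel_eq_one p (r := c (.of .a2) (.of .a5)) (show _ ∈ rels p from Set.mem_insert_of_mem _ (Set.mem_insert_of_mem _ (Set.mem_insert_of_mem _ (Set.mem_insert_of_mem _ (Set.mem_insert_of_mem _ (Set.mem_insert_of_mem _ (Set.mem_insert_of_mem _ (Set.mem_insert_of_mem _ (Set.mem_insert_of_mem _ (Set.mem_insert_of_mem _ (Set.mem_insert_of_mem _ (Set.mem_insert _ _))))))))))))
  simp only [c, _root_.map_mul, _root_.map_inv, mk_of] at h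
  exact comm_of_commutator h

theorem R34 : X3 * X4 = X4 * X3 := by
  have h := rel_eq_one p (r := c (.of .a3) (.of .a4)) (show _ ∈ rels p from Set.mem_insert_of_mem _ (Set.mem_insert_of_mem _ (Set.mem_insert_of_mem _ (Set.mem_insert_of_mem _ (Set.mem_insert_of_mem _ (Set.mem_insert_of_mem _ (Set.mem_insert_of_mem _ (Set.mem_insert_of_mem _ (Set.mem_insert_of_mem _ (Set.mem_insert_of_mem _ (Set.mem_insert_of_mem _ (Set.mem_insert_of_mem _ (Set.mem_insert _ _)))))))))))))
  simp only [c, _root_.map_mul, _root_.map_inv, mk_of] at h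
  exact comm_of_commutator h

theorem R35 : X3 * X5 = X5 * X3 := by
  have h := rel_eq_one p (r := c (.of .a3) (.of .a5)) (show _ ∈ rels p from Set.mem_insert_of_mem _ (Set.mem_insert_of_mem _ (Set.mem_insert_of_mem _ (Set.mem_insert_of_mem _ (Set.mem_insert_of_mem _ (Set.mem_insert_of_mem _ (Set.mem_insert_of_mem _ (Set.mem_insert_of_mem _ (Set.mem_insert_of_mem _ (Set.mem_insert_of_mem _ (Set.mem_insert_of_mem _ (Set.mem_insert_of_mem _ (Set.mem_insert_of_mem _ (Set.mem_insert _ _))))))))))))))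
  simp only [c, _root_.map_mul, _root_.map_inv, mk_of] at h
  exact comm_of_commutator h

theorem R45' : X4 * X5 = X5 * X4 := by
  have h := rel_eq_one p (r := c (.of .a4) (.of .a5)) (show _ ∈ rels p from Set.mem_insert_of_mem _ (Set.mem_insert_of_mem _ (Set.mem_insert_of_mem _ (Set.mem_insert_of_mem _ (Set.mem_insert_of_mem _ (Set.mem_insert_of_mem _ (Set.mem_insert_of_mem _ (Set.mem_insert_of_mem _ (Set.mem_insert_of_mem _ (Set.mem_insert_of_mem _ (Set.mem_insert_of_mem _ (Set.mem_insert_of_mem _ (Set.mem_insert_of_mem _ (Set.mem_insert_of_mem _ (Set.mem_insert _ _)))))))))))))))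
  simp only [c, _root_.map_mul, _root_.map_inv, mk_of] at h
  exact comm_of_commutator h

theorem Rtp : T° ^ p = 1 := by
  have h := rel_eq_one p (r := (FreeGroup.of Gen.a) ^ p) (show _ ∈ rels p from Set.mem_insert_of_mem _ (Set.mem_insert_of_mem _ (Set.mem_insert_of_mem _ (Set.mem_insert_of_mem _ (Set.mem_insert_of_mem _ (Set.mem_insert_of_mem _ (Set.mem_insert_of_mem _ (Set.mem_insert_of_mem _ (Set.mem_insert_of_mem _ (Set.mem_insert_of_mem _ (Set.mem_insert_of_mem _ (Set.mem_insert_of_mem _ (Set.mem_insert_of_mem _ (Set.mem_insert_of_mem _ (Set.mem_insert_of_mem _ (Set.mem_insert _ _))))))))))))))))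
  simpa only [_root_.map_pow, mk_of] using h

theorem Rp1 : X1 ^ p * X2 ^ (p.choose 2) * X3 ^ (p.choose 3) * X4 ^ (p.choose 4)
    * X5 ^ (p.choose 5) = 1 := by
  have h := rel_eq_one p
    (r := (FreeGroup.of Gen.a1) ^ p * (FreeGroup.of Gen.a2) ^ (p.choose 2)
      * (FreeGroup.of Gen.a3) ^ (p.choose 3) * (FreeGroup.of Gen.a4) ^ (p.choose 4)
      * (FreeGroup.of Gen.a5) ^ (p.choose 5)) (show _ ∈ rels p from Set.mem_insert_of_mem _ (Set.mem_insert_of_mem _ (Set.mem_insert_of_mem _ (Set.mem_insert_of_mem _ (Set.mem_insert_of_mem _ (Set.mem_insert_of_mem _ (Set.mem_insert_of_mem _ (Set.mem_insert_of_mem _ (Set.mem_insert_of_mem _ (Set.mem_insert_of_mem _ (Set.mem_insert_of_mem _ (Set.mem_insert_of_mem _ (Set.mem_insert_of_mem _ (Set.mem_insert_of_mem _ (Set.mem_insert_of_mem _ (Set.mem_insert_of_mem _ (Set.mem_insert _ _)))))))))))))))))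
  simpa only [_root_.map_mul, _root_.map_pow, mk_of] using h

theorem Rp2 : X2 ^ p * X3 ^ (p.choose 2) * X4 ^ (p.choose 3) * X5 ^ (p.choose 4) = 1 := by
  have h := rel_eq_one p
    (r := (FreeGroup.of Gen.a2) ^ p * (FreeGroup.of Gen.a3) ^ (p.choose 2)
      * (FreeGroup.of Gen.a4) ^ (p.choose 3) * (FreeGroup.of Gen.a5) ^ (p.choose 4))
    (show _ ∈ rels p from Set.mem_insert_of_mem _ (Set.mem_insert_of_mem _ (Set.mem_insert_of_mem _ (Set.mem_insert_of_mem _ (Set.mem_insert_of_mem _ (Set.mem_insert_of_mem _ (Set.mem_insert_of_mem _ (Set.mem_insert_of_mem _ (Set.mem_insert_of_mem _ (Set.mem_insert_of_mem _ (Set.mem_insert_of_mem _ (Set.mem_insert_of_mem _ (Set.mem_insert_of_mem _ (Set.mem_insert_of_mem _ (Set.mem_insert_of_mem _ (Set.mem_insert_of_mem _ (Set.mem_insert_of_mem _ (Set.mem_insert _ _))))))))))))))))))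
  simpa only [_root_.map_mul, _root_.map_pow, mk_of] using h

theorem Rp3 : X3 ^ p * X4 ^ (p.choose 2) * X5 ^ (p.choose 3) = 1 := by
  have h := rel_eq_one p
    (r := (FreeGroup.of Gen.a3) ^ p * (FreeGroup.of Gen.a4) ^ (p.choose 2)
      * (FreeGroup.of Gen.a5) ^ (p.choose 3)) (show _ ∈ rels p from Set.mem_insert_of_mem _ (Set.mem_insert_of_mem _ (Set.mem_insert_of_mem _ (Set.mem_insert_of_mem _ (Set.mem_insert_of_mem _ (Set.mem_insert_of_mem _ (Set.mem_insert_of_mem _ (Set.mem_insert_of_mem _ (Set.mem_insert_of_mem _ (Set.mem_insert_of_mem _ (Set.mem_insert_of_mem _ (Set.mem_insert_of_mem _ (Set.mem_insert_of_mem _ (Set.mem_insert_of_mem _ (Set.mem_insert_of_mem _ (Set.mem_insert_of_mem _ (Set.mem_insert_of_mem _ (Set.mem_insert_of_mem _ (Set.mem_insert _ _)))))))))))))))))))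
  simpa only [_root_.map_mul, _root_.map_pow, mk_of] using h

theorem Rp4 : X4 ^ p * X5 ^ (p.choose 2) = 1 := by
  have h := rel_eq_one p
    (r := (FreeGroup.of Gen.a4) ^ p * (FreeGroup.of Gen.a5) ^ (p.choose 2)) (show _ ∈ rels p from Set.mem_insert_of_mem _ (Set.mem_insert_of_mem _ (Set.mem_insert_of_mem _ (Set.mem_insert_of_mem _ (Set.mem_insert_of_mem _ (Set.mem_insert_of_mem _ (Set.mem_insert_of_mem _ (Set.mem_insert_of_mem _ (Set.mem_insert_of_mem _ (Set.mem_insert_of_mem _ (Set.mem_insert_of_mem _ (Set.mem_insert_of_mem _ (Set.mem_insert_of_mem _ (Set.mem_insert_of_mem _ (Set.mem_insert_of_mem _ (Set.mem_insert_of_mem _ (Set.mem_insert_of_mem _ (Set.mem_insert_of_mem _ (Set.mem_insert_of_mem _ (Set.mem_insert _ _))))))))))))))))))))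
  simpa only [_root_.map_mul, _root_.map_pow, mk_of] using h

theorem Rp5 : X5 ^ p = 1 := by
  have h := rel_eq_one p (r := (FreeGroup.of Gen.a5) ^ p) (show _ ∈ rels p from Set.mem_insert_of_mem _ (Set.mem_insert_of_mem _ (Set.mem_insert_of_mem _ (Set.mem_insert_of_mem _ (Set.mem_insert_of_mem _ (Set.mem_insert_of_mem _ (Set.mem_insert_of_mem _ (Set.mem_insert_of_mem _ (Set.mem_insert_of_mem _ (Set.mem_insert_of_mem _ (Set.mem_insert_of_mem _ (Set.mem_insert_of_mem _ (Set.mem_insert_of_mem _ (Set.mem_insert_of_mem _ (Set.mem_insert_of_mem _ (Set.mem_insert_of_mem _ (Set.mem_insert_of_mem _ (Set.mem_insert_of_mem _ (Set.mem_insert_of_mem _ (Set.mem_insert_of_mem _ (Set.mem_singleton _)))))))))))))))))))))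
  simpa only [_root_.map_pow, mk_of] using h

end Pfacts

section GroupHelpers2

variable {H : Type} [Group H]

theorem conj_mul_central {a z t : H} (hz : z * t = t * z) :
    t⁻¹ * (a * z) * t = (t⁻¹ * a * t) * z := by
  calc t⁻¹ * (a * z) * t = t⁻¹ * a * (z * t) := by group
    _ = t⁻¹ * a * (t * z) := by rw [hz]
    _ = (t⁻¹ * a * t) * z := by group

end GroupHelpers2

section Pmain

variable (p : ℕ)

local notation "T°" => (PresentedGroup.of Gen.a : PresentedGroup (rels p))
local notation "X1" => (PresentedGroup.of Gen.a1 : PresentedGroup (rels p))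
local notation "X2" => (PresentedGroup.of Gen.a2 : PresentedGroup (rels p))
local notation "X3" => (PresentedGroup.of Gen.a3 : PresentedGroup (rels p))
local notation "X4" => (PresentedGroup.of Gen.a4 : PresentedGroup (rels p))
local notation "X5" => (PresentedGroup.of Gen.a5 : PresentedGroup (rels p))

set_option maxHeartbeats 2000000 in
theorem main_aux (hp : p ≠ 0) : BogomolovMultiplierIsTrivial (PresentedGroup (rels p)) := by
  intro f hf hb
  classical
  set S : Set (PresentedGroup (rels p)) := {X1, X2, X3, X4, X5} with hS
  set A : Subgroup (PresentedGroup (rels p)) := Subgroup.closure S with hA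
  have hx1A : X1 ∈ A := Subgroup.subset_closure (Set.mem_insert _ _)
  have hx2A : X2 ∈ A := Subgroup.subset_closure (Set.mem_insert_of_mem _ (Set.mem_insert _ _))
  have hx3A : X3 ∈ A := Subgroup.subset_closure
    (Set.mem_insert_of_mem _ (Set.mem_insert_of_mem _ (Set.mem_insert _ _)))
  have hx4A : X4 ∈ A := Subgroup.subset_closure
    (Set.mem_insert_of_mem _ (Set.mem_insert_of_mem _ (Set.mem_insert_of_mem _
      (Set.mem_insert _ _))))
  have hx5A : X5 ∈ A := Subgroup.subset_closure
    (Set.mem_insert_of_mem _ (Set.mem_insert_of_mem _ (Set.mem_insert_of_mem _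
      (Set.mem_insert_of_mem _ (Set.mem_singleton _)))))
  have hScomm : ∀ a ∈ S, ∀ b ∈ S, a * b = b * a := by
    intro a ha b hbm
    simp only [hS, Set.mem_insert_iff, Set.mem_singleton_iff] at ha hbm
    rcases ha with rfl|rfl|rfl|rfl|rfl <;> rcases hbm with rfl|rfl|rfl|rfl|rfl <;>
      first
        | rfl
        | exact R12 p | exact (R12 p).symm
        | exact R13 p | exact (R13 p).symm
        | exact R14 p | exact (R14 p).symm
        | exact R15 p | exact (R15 p).symm
        | exact R23 p | exact (R23 p).symm
        | exact R24 p | exact (R24 p).symm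
        | exact R25 p | exact (R25 p).symm
        | exact R34 p | exact (R34 p).symm
        | exact R35 p | exact (R35 p).symm
        | exact R45' p | exact (R45' p).symm
  have hAcomm : ∀ u v : ↥A, u * v = v * u := by
    rintro ⟨u, hu⟩ ⟨v, hv⟩
    have h1 := Subgroup.closure_le_centralizer_centralizer S
    rw [← hA] at h1
    exact Subtype.ext <|
      Set.centralizer_centralizer_comm_of_comm hScomm u (h1 hu) v (h1 hv)
  have hAcomm' : ∀ u v : PresentedGroup (rels p), u ∈ A → v ∈ A → u * v = v * u :=
    fun u v hu hv => congrArg Subtype.val (hAcomm ⟨u, hu⟩ ⟨v, hv⟩)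
  -- conjugation facts
  have hb5 : T°⁻¹ * X5 * T° = X5 := by
    calc T°⁻¹ * X5 * T° = T°⁻¹ * (X5 * T°) := by group
      _ = T°⁻¹ * (T° * X5) := by rw [← Rt5 p]
      _ = X5 := by group
  have hbwd : ∀ g ∈ A, T°⁻¹ * g * T° ∈ A := by
    intro g hg
    have hmap : A.map (MulAut.conj T°⁻¹).toMonoidHom ≤ A := by
      rw [hA, MonoidHom.map_closure]
      apply (Subgroup.closure_le _).mpr
      rintro _ ⟨s, hs, rfl⟩
      simp only [hS, Set.mem_insert_iff, Set.mem_singleton_iff] at hs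
      have e : ∀ x : PresentedGroup (rels p),
          (MulAut.conj T°⁻¹).toMonoidHom x = T°⁻¹ * x * T° := by
        intro x; simp [MulAut.conj_apply]
      rcases hs with rfl|rfl|rfl|rfl|rfl
      · rw [e]; rw [R1 p]; exact mul_mem hx1A hx2A
      · rw [e]; rw [R2 p]; exact mul_mem hx2A hx3A
      · rw [e]; rw [R3 p]; exact mul_mem hx3A hx4A
      · rw [e]; rw [R4 p]; exact mul_mem hx4A hx5A
      · rw [e]; rw [hb5]; exact hx5A
    have : (MulAut.conj T°⁻¹).toMonoidHom g ∈ A :=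
      hmap (Subgroup.mem_map_of_mem _ hg)
    simpa [MulAut.conj_apply] using this
  have hk5 : T° * X5 * T°⁻¹ = X5 := by
    calc T° * X5 * T°⁻¹ = (X5 * T°) * T°⁻¹ := by rw [Rt5 p]
      _ = X5 := by group
  have hk5m : T° * X5 * T°⁻¹ ∈ A := by rw [hk5]; exact hx5A
  have hstep : ∀ u v : PresentedGroup (rels p), T°⁻¹ * u * T° = u * v →
      T° * v * T°⁻¹ ∈ A → u ∈ A → T° * u * T°⁻¹ ∈ A := by
    intro u v hr hv hu
    have e1 : T° * (u * v) * T°⁻¹ = u := by rw [← hr]; group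
    have e2 : T° * u * T°⁻¹ * (T° * v * T°⁻¹) = u := by
      calc T° * u * T°⁻¹ * (T° * v * T°⁻¹) = T° * (u * v) * T°⁻¹ := by group
        _ = u := e1
    have e3 : T° * u * T°⁻¹ = u * (T° * v * T°⁻¹)⁻¹ := eq_mul_inv_of_mul_eq e2
    rw [e3]
    exact mul_mem hu (inv_mem hv)
  have hk4m : T° * X4 * T°⁻¹ ∈ A := hstep _ _ (R4 p) hk5m hx4A
  have hk3m : T° * X3 * T°⁻¹ ∈ A := hstep _ _ (R3 p) hk4m hx3A
  have hk2m : T° * X2 * T°⁻¹ ∈ A := hstep _ _ (R2 p) hk3m hx2A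
  have hk1m : T° * X1 * T°⁻¹ ∈ A := hstep _ _ (R1 p) hk2m hx1A
  have hfwd : ∀ g ∈ A, T° * g * T°⁻¹ ∈ A := by
    intro g hg
    have hmap : A.map (MulAut.conj T°).toMonoidHom ≤ A := by
      rw [hA, MonoidHom.map_closure]
      apply (Subgroup.closure_le _).mpr
      rintro _ ⟨s, hs, rfl⟩
      simp only [hS, Set.mem_insert_iff, Set.mem_singleton_iff] at hs
      have e : ∀ x : PresentedGroup (rels p),
          (MulAut.conj T°).toMonoidHom x = T° * x * T°⁻¹ := by
        intro x; simp [MulAut.conj_apply]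
      rcases hs with rfl|rfl|rfl|rfl|rfl
      · rw [e]; exact hk1m
      · rw [e]; exact hk2m
      · rw [e]; exact hk3m
      · rw [e]; exact hk4m
      · rw [e]; exact hk5m
    have : (MulAut.conj T°).toMonoidHom g ∈ A := hmap (Subgroup.mem_map_of_mem _ hg)
    simpa [MulAut.conj_apply] using this
  have hAnormal : A.Normal := by
    rw [← Subgroup.normalizer_eq_top_iff, eq_top_iff, ← PresentedGroup.closure_range_of (rels p)]
    apply (Subgroup.closure_le _).mpr
    rintro g ⟨gen, rfl⟩
    rw [SetLike.mem_coe]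
    cases gen with
    | a =>
      rw [Subgroup.mem_normalizer_iff]
      intro h
      constructor
      · intro hh; exact hfwd h hh
      · intro hh
        have h2 := hbwd _ hh
        have e : T°⁻¹ * (T° * h * T°⁻¹) * T° = h := by group
        rwa [e] at h2
    | a1 => exact Subgroup.le_normalizer hx1A
    | a2 => exact Subgroup.le_normalizer hx2A
    | a3 => exact Subgroup.le_normalizer hx3A
    | a4 => exact Subgroup.le_normalizer hx4A
    | a5 => exact Subgroup.le_normalizer hx5A
  -- Step 1: make f vanish on A × A
  have hrest : IsTwoCocycle (fun a b : ↥A => f ↑a ↑b) := by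
    intro g h j
    simp only [Subgroup.coe_mul]
    exact hf ↑g ↑h ↑j
  have hsymA : ∀ a b : ↥A, f ↑a ↑b = f ↑b ↑a := fun a b =>
    antisym hf hb (hAcomm' ↑a ↑b a.2 b.2)
  obtain ⟨c0, hc0⟩ := symm_cocycle_coboundary hAcomm hrest hsymA
  set ct : PresentedGroup (rels p) → QZ :=
    fun g => if h : g ∈ A then c0 ⟨g, h⟩ else 0 with hct
  set f1 : PresentedGroup (rels p) → PresentedGroup (rels p) → QZ :=
    fun g h => f g h - (ct h - ct (g * h) + ct g) with hf1def
  have hctA : ∀ (g : PresentedGroup (rels p)) (hg : g ∈ A), ct g = c0 ⟨g, hg⟩ := by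
    intro g hg
    rw [hct]
    exact dif_pos hg
  have hf1 : IsTwoCocycle f1 := by
    intro g h j
    show (f h j - (ct j - ct (h * j) + ct h))
        - (f (g * h) j - (ct j - ct ((g * h) * j) + ct (g * h)))
        + (f g (h * j) - (ct (h * j) - ct (g * (h * j)) + ct g))
        - (f g h - (ct h - ct (g * h) + ct g)) = 0
    rw [mul_assoc g h j]
    have e : (f h j - (ct j - ct (h * j) + ct h))
        - (f (g * h) j - (ct j - ct (g * (h * j)) + ct (g * h)))
        + (f g (h * j) - (ct (h * j) - ct (g * (h * j)) + ct g))
        - (f g h - (ct h - ct (g * h) + ct g))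
        = f h j - f (g * h) j + f g (h * j) - f g h := by abel
    rw [e]
    exact hf g h j
  have h1vanish : ∀ g h : PresentedGroup (rels p), g ∈ A → h ∈ A → f1 g h = 0 := by
    intro g h hg hh
    show f g h - (ct h - ct (g * h) + ct g) = 0
    rw [hctA h hh, hctA g hg, hctA (g * h) (mul_mem hg hh), sub_eq_zero]
    exact hc0 ⟨g, hg⟩ ⟨h, hh⟩
  have h011 : f1 1 1 = 0 := h1vanish 1 1 (one_mem A) (one_mem A)
  have hanti1_t5 : f1 T° X5 = f1 X5 T° := by
    show f T° X5 - (ct X5 - ct (T° * X5) + ct T°) = f X5 T° - (ct T° - ct (X5 * T°) + ct X5)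
    rw [Rt5 p, antisym hf hb (Rt5 p)]
    abel
  have hcob_lift : IsTwoCoboundary f1 → IsTwoCoboundary f := by
    rintro ⟨c1, hc1⟩
    refine ⟨fun g => c1 g + ct g, fun g h => ?_⟩
    have e : f g h - (ct h - ct (g * h) + ct g) = c1 h - c1 (g * h) + c1 g := hc1 g h
    have e2 : f g h = (f g h - (ct h - ct (g * h) + ct g)) + (ct h - ct (g * h) + ct g) := by
      abel
    rw [e2, e]
    beta_reduce
    abel
  apply hcob_lift
  -- Step 2: the central extension and the splitting data
  have hjmul : ∀ u v : ↥A,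
      (Ext.mk 0 ↑(u * v) : Ext f1 hf1 h011) = (Ext.mk 0 ↑u : Ext f1 hf1 h011) * (Ext.mk 0 ↑v : Ext f1 hf1 h011) := by
    intro u v
    refine (Ext.ext ?_ ?_).symm
    · show (0 : QZ) + 0 + f1 ↑u ↑v = 0
      rw [h1vanish ↑u ↑v u.2 v.2]
      abel
    · show (↑u * ↑v : PresentedGroup (rels p)) = ↑(u * v)
      simp
  set jA : ↥A →* Ext f1 hf1 h011 :=
    MonoidHom.mk' (fun v => Ext.mk 0 ↑v) hjmul with hjA
  have hjA_apply : ∀ v : ↥A, jA v = Ext.mk 0 ↑v := fun v => rfl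
  set L : Ext f1 hf1 h011 := Ext.mk 0 T° with hL
  have hLpow_g : (L ^ p).g = 1 := by
    have e1 : (L ^ p).g = piE f1 hf1 h011 (L ^ p) := rfl
    rw [e1, _root_.map_pow]
    show (L.g) ^ p = 1
    rw [hL]
    show T° ^ p = 1
    exact Rtp p
  have hLp : L ^ p = zeta f1 hf1 h011 ((L ^ p).q) := eq_zeta_of_g_eq_one _ hLpow_g
  obtain ⟨q0, hq0⟩ := qz_div p hp (-(L ^ p).q)
  set Tl : Ext f1 hf1 h011 := zeta f1 hf1 h011 q0 * L with hTl
  have hTp : Tl ^ p = 1 := by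
    rw [hTl, Commute.mul_pow ((zeta_comm q0 L)), zeta_pow, hLp, zeta_mul, hq0,
      neg_add_cancel, zeta_zero]
  have hTlg : Tl.g = T° := by rw [hTl]; show 1 * T° = T°; rw [one_mul]
  -- the homomorphism λ : A → QZ
  set lam : ↥A → QZ := fun v => (Tl⁻¹ * (Ext.mk 0 ↑v : Ext f1 hf1 h011) * Tl).q with hlam
  have hsig : ∀ v : ↥A, T°⁻¹ * ↑v * T° ∈ A := fun v => hbwd ↑v v.2
  have hTconj : ∀ v : ↥A, Tl⁻¹ * (jA v) * Tl
      = jA ⟨T°⁻¹ * ↑v * T°, hsig v⟩ * zeta f1 hf1 h011 (lam v) := by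
    intro v
    refine Ext.ext ?_ ?_
    · show (Tl⁻¹ * (Ext.mk 0 ↑v : Ext f1 hf1 h011) * Tl).q = (0 : QZ) + lam v + f1 (T°⁻¹ * ↑v * T°) 1
      rw [f_one_right hf1 h011, hlam]
      abel
    · show (Tl⁻¹ * (Ext.mk 0 ↑v : Ext f1 hf1 h011) * Tl).g = (T°⁻¹ * ↑v * T°) * 1
      simp only [Ext.mul_g, Ext.inv_g, Ext.g_mk, hTlg, mul_one]
  have hlam_one : lam (1 : ↥A) = 0 := by
    have e : (Ext.mk 0 ↑(1 : ↥A) : Ext f1 hf1 h011) = 1 := by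
      refine Ext.ext rfl ?_
      show ((1 : ↥A) : PresentedGroup (rels p)) = 1
      simp
    rw [hlam]
    show (Tl⁻¹ * (Ext.mk 0 ↑(1 : ↥A) : Ext f1 hf1 h011) * Tl).q = 0
    rw [e, mul_one, inv_mul_cancel]
    rfl
  have hlam_add : ∀ u v : ↥A, lam (u * v) = lam u + lam v := by
    intro u v
    have h2 : Tl⁻¹ * (jA (u * v)) * Tl = (Tl⁻¹ * jA u * Tl) * (Tl⁻¹ * jA v * Tl) := by
      rw [_root_.map_mul]; group
    rw [hTconj u, hTconj v, hTconj (u * v)] at h2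
    have h3 := congrArg Ext.q h2
    simp only [Ext.mul_q, hjA_apply, Ext.q_mk, Ext.g_mk, Ext.mul_g, zeta_q, zeta_g,
      mul_one] at h3
    rw [f_one_right hf1 h011, f_one_right hf1 h011, f_one_right hf1 h011,
      h1vanish _ _ (hsig u) (hsig v)] at h3
    have h4 : lam (u * v) = lam u + lam v + 0 := by
      calc lam (u * v) = 0 + lam (u * v) + 0 := by abel
        _ = 0 + lam u + 0 + (0 + lam v + 0) + 0 := h3
        _ = lam u + lam v + 0 := by abel
    rw [h4]; abel
  have hlam_pow : ∀ (v : ↥A) (n : ℕ), lam (v ^ n) = n • lam v := by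
    intro v n
    induction n with
    | zero => simpa using hlam_one
    | succ n ih => rw [pow_succ, hlam_add, ih, succ_nsmul]
  have hlam_inv : ∀ v : ↥A, lam v⁻¹ = -lam v := by
    intro v
    have := hlam_add v⁻¹ v
    rw [inv_mul_cancel, hlam_one] at this
    exact eq_neg_of_add_eq_zero_left this.symm
  -- v-elements
  set v1 : ↥A := ⟨X1, hx1A⟩ with hv1
  set v2 : ↥A := ⟨X2, hx2A⟩ with hv2
  set v3 : ↥A := ⟨X3, hx3A⟩ with hv3
  set v4 : ↥A := ⟨X4, hx4A⟩ with hv4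
  set v5 : ↥A := ⟨X5, hx5A⟩ with hv5
  have hconj_indep : ∀ e : Ext f1 hf1 h011, Tl⁻¹ * e * Tl = L⁻¹ * e * L := by
    intro e
    rw [hTl]
    calc (zeta f1 hf1 h011 q0 * L)⁻¹ * e * (zeta f1 hf1 h011 q0 * L)
        = L⁻¹ * ((zeta f1 hf1 h011 q0)⁻¹ * e * zeta f1 hf1 h011 q0) * L := by group
      _ = L⁻¹ * (zeta f1 hf1 h011 (-q0) * e * zeta f1 hf1 h011 q0) * L := by rw [zeta_inv]
      _ = L⁻¹ * (e * zeta f1 hf1 h011 (-q0) * zeta f1 hf1 h011 q0) * L := by rw [zeta_comm]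
      _ = L⁻¹ * (e * zeta f1 hf1 h011 (-q0 + q0)) * L := by rw [mul_assoc e, zeta_mul]
      _ = L⁻¹ * e * L := by rw [neg_add_cancel, zeta_zero, mul_one]
  have hx5c := conj_q_zero hf1 h011 T° X5 (Rt5 p) hanti1_t5
  have hlam_x5 : lam v5 = 0 := by
    have h1 : lam v5 = (L⁻¹ * (Ext.mk 0 X5 : Ext f1 hf1 h011) * L).q := by
      rw [hlam]
      show (Tl⁻¹ * (Ext.mk 0 ↑v5 : Ext f1 hf1 h011) * Tl).q = _
      rw [hconj_indep]
    rw [h1, hL]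
    simp only [Ext.mul_q, Ext.mul_g, Ext.inv_q, Ext.inv_g, Ext.q_mk, Ext.g_mk]
    rw [← hx5c]
    abel
  -- relation identities in ↥A
  have hw1 : (v1 ^ p * v2 ^ (p.choose 2) * v3 ^ (p.choose 3) * v4 ^ (p.choose 4)
      * v5 ^ (p.choose 5) : ↥A) = 1 := by
    refine Subtype.ext ?_
    show X1 ^ p * X2 ^ (p.choose 2) * X3 ^ (p.choose 3) * X4 ^ (p.choose 4)
      * X5 ^ (p.choose 5) = 1
    exact Rp1 p
  have hw2 : (v2 ^ p * v3 ^ (p.choose 2) * v4 ^ (p.choose 3) * v5 ^ (p.choose 4) : ↥A) = 1 := by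
    refine Subtype.ext ?_
    show X2 ^ p * X3 ^ (p.choose 2) * X4 ^ (p.choose 3) * X5 ^ (p.choose 4) = 1
    exact Rp2 p
  have hw3 : (v3 ^ p * v4 ^ (p.choose 2) * v5 ^ (p.choose 3) : ↥A) = 1 := by
    refine Subtype.ext ?_
    show X3 ^ p * X4 ^ (p.choose 2) * X5 ^ (p.choose 3) = 1
    exact Rp3 p
  have hw4 : (v4 ^ p * v5 ^ (p.choose 2) : ↥A) = 1 := by
    refine Subtype.ext ?_
    show X4 ^ p * X5 ^ (p.choose 2) = 1
    exact Rp4 p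
  have hw5 : (v5 ^ p : ↥A) = 1 := by
    refine Subtype.ext ?_
    show X5 ^ p = 1
    exact Rp5 p
  have E1 : p • lam v1 + (p.choose 2) • lam v2 + (p.choose 3) • lam v3
      + (p.choose 4) • lam v4 + (p.choose 5) • lam v5 = 0 := by
    have h := congrArg lam hw1
    rw [hlam_add, hlam_add, hlam_add, hlam_add, hlam_pow, hlam_pow, hlam_pow, hlam_pow,
      hlam_pow, hlam_one] at h
    exact h
  have E2 : p • lam v2 + (p.choose 2) • lam v3 + (p.choose 3) • lam v4
      + (p.choose 4) • lam v5 = 0 := by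
    have h := congrArg lam hw2
    rw [hlam_add, hlam_add, hlam_add, hlam_pow, hlam_pow, hlam_pow, hlam_pow, hlam_one] at h
    exact h
  have E3 : p • lam v3 + (p.choose 2) • lam v4 + (p.choose 3) • lam v5 = 0 := by
    have h := congrArg lam hw3
    rw [hlam_add, hlam_add, hlam_pow, hlam_pow, hlam_pow, hlam_one] at h
    exact h
  have E4 : p • lam v4 + (p.choose 2) • lam v5 = 0 := by
    have h := congrArg lam hw4
    rw [hlam_add, hlam_pow, hlam_pow, hlam_one] at h
    exact h
  have hE1' : p • lam v1 + (p.choose 2) • lam v2 + (p.choose 3) • lam v3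
      + (p.choose 4) • lam v4 = 0 := by
    rw [hlam_x5, smul_zero, add_zero] at E1; exact E1
  have hE2' : p • lam v2 + (p.choose 2) • lam v3 + (p.choose 3) • lam v4 = 0 := by
    rw [hlam_x5, smul_zero, add_zero] at E2; exact E2
  have hE3' : p • lam v3 + (p.choose 2) • lam v4 = 0 := by
    rw [hlam_x5, smul_zero, add_zero] at E3; exact E3
  have hE4' : p • lam v4 = 0 := by
    rw [hlam_x5, smul_zero, add_zero] at E4; exact E4
  obtain ⟨d1, hd1⟩ := qz_div p hp
    (-((p.choose 2) • lam v1 + (p.choose 3) • lam v2 + (p.choose 4) • lam v3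
      + (p.choose 5) • lam v4))
  -- generator images
  set Y : Gen → Ext f1 hf1 h011 := fun g => match g with
    | .a => Tl
    | .a1 => jA v1 * zeta f1 hf1 h011 d1
    | .a2 => jA v2 * zeta f1 hf1 h011 (lam v1)
    | .a3 => jA v3 * zeta f1 hf1 h011 (lam v2)
    | .a4 => jA v4 * zeta f1 hf1 h011 (lam v3)
    | .a5 => jA v5 * zeta f1 hf1 h011 (lam v4) with hY
  have hYa : Y Gen.a = Tl := by rw [hY]
  have hY1 : Y Gen.a1 = jA v1 * zeta f1 hf1 h011 d1 := by rw [hY]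
  have hY2 : Y Gen.a2 = jA v2 * zeta f1 hf1 h011 (lam v1) := by rw [hY]
  have hY3 : Y Gen.a3 = jA v3 * zeta f1 hf1 h011 (lam v2) := by rw [hY]
  have hY4 : Y Gen.a4 = jA v4 * zeta f1 hf1 h011 (lam v3) := by rw [hY]
  have hY5 : Y Gen.a5 = jA v5 * zeta f1 hf1 h011 (lam v4) := by rw [hY]
  -- conjugation relation checks
  have hconjY : ∀ (v w : ↥A) (q : QZ), T°⁻¹ * ↑v * T° = ↑v * ↑w →
      Tl⁻¹ * (jA v * zeta f1 hf1 h011 q) * Tl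
        = (jA v * jA w) * zeta f1 hf1 h011 (lam v + q) := by
    intro v w q hr
    rw [conj_mul_central (zeta_comm q Tl), hTconj v]
    have hσ : (⟨T°⁻¹ * ↑v * T°, hsig v⟩ : ↥A) = v * w := by
      refine Subtype.ext ?_
      show T°⁻¹ * ↑v * T° = ↑(v * w)
      rw [hr]
      rfl
    rw [hσ, _root_.map_mul, mul_assoc (jA v * jA w), zeta_mul]
  have hcase_conj : ∀ (v w : ↥A) (q : QZ), T°⁻¹ * ↑v * T° = ↑v * ↑w →
      (jA v * zeta f1 hf1 h011 q)⁻¹ * Tl⁻¹ * (jA v * zeta f1 hf1 h011 q) * Tl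
        * (jA w * zeta f1 hf1 h011 (lam v))⁻¹ = 1 := by
    intro v w q hr
    have key := hconjY v w q hr
    calc (jA v * zeta f1 hf1 h011 q)⁻¹ * Tl⁻¹ * (jA v * zeta f1 hf1 h011 q) * Tl
          * (jA w * zeta f1 hf1 h011 (lam v))⁻¹
        = (jA v * zeta f1 hf1 h011 q)⁻¹ * (Tl⁻¹ * (jA v * zeta f1 hf1 h011 q) * Tl)
          * (jA w * zeta f1 hf1 h011 (lam v))⁻¹ := by group
      _ = (jA v * zeta f1 hf1 h011 q)⁻¹ * ((jA v * jA w) * zeta f1 hf1 h011 (lam v + q))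
          * (jA w * zeta f1 hf1 h011 (lam v))⁻¹ := by rw [key]
      _ = ((jA v)⁻¹ * zeta f1 hf1 h011 (-q)) * ((jA v * jA w) * zeta f1 hf1 h011 (lam v + q))
          * ((jA w)⁻¹ * zeta f1 hf1 h011 (-(lam v))) := by rw [zmul_inv, zmul_inv]
      _ = ((jA v)⁻¹ * (jA v * jA w) * (jA w)⁻¹)
          * zeta f1 hf1 h011 (-q + (lam v + q) + -(lam v)) := by rw [zmul_mul, zmul_mul]
      _ = 1 := by
          rw [show (jA v)⁻¹ * (jA v * jA w) * (jA w)⁻¹ = 1 from by group,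
            show -q + (lam v + q) + -(lam v) = 0 from by abel, zeta_zero, mul_one]
  have hcase_comm : ∀ (v w : ↥A) (q r : QZ),
      (jA v * zeta f1 hf1 h011 q)⁻¹ * (jA w * zeta f1 hf1 h011 r)⁻¹
        * (jA v * zeta f1 hf1 h011 q) * (jA w * zeta f1 hf1 h011 r) = 1 := by
    intro v w q r
    rw [zmul_inv, zmul_inv, zmul_mul, zmul_mul, zmul_mul]
    have hgrp : (jA v)⁻¹ * (jA w)⁻¹ * jA v * jA w = 1 := by
      rw [← _root_.map_inv, ← _root_.map_inv, ← _root_.map_mul, ← _root_.map_mul,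
        ← _root_.map_mul]
      have e : v⁻¹ * w⁻¹ * v * w = 1 := by
        have e2 : v⁻¹ * w⁻¹ * v * w = v⁻¹ * w⁻¹ * (v * w) := by group
        rw [e2, hAcomm v w]
        group
      rw [e, _root_.map_one]
    rw [hgrp, show -q + -r + q + r = 0 from by abel, zeta_zero, mul_one]
  have hconj5 : Tl⁻¹ * (jA v5 * zeta f1 hf1 h011 (lam v4))⁻¹ * Tl
      * (jA v5 * zeta f1 hf1 h011 (lam v4)) = 1 := by
    have hr5 : T°⁻¹ * ↑(v5⁻¹) * T° = ↑(v5⁻¹) * ↑(1 : ↥A) := by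
      show T°⁻¹ * X5⁻¹ * T° = X5⁻¹ * 1
      rw [mul_one]
      calc T°⁻¹ * X5⁻¹ * T° = (T°⁻¹ * X5 * T°)⁻¹ := by group
        _ = X5⁻¹ := by rw [hb5]
    have key := hconjY v5⁻¹ 1 (-(lam v4)) hr5
    calc Tl⁻¹ * (jA v5 * zeta f1 hf1 h011 (lam v4))⁻¹ * Tl
          * (jA v5 * zeta f1 hf1 h011 (lam v4))
        = (Tl⁻¹ * ((jA v5)⁻¹ * zeta f1 hf1 h011 (-(lam v4))) * Tl)
          * (jA v5 * zeta f1 hf1 h011 (lam v4)) := by rw [zmul_inv]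
      _ = (Tl⁻¹ * (jA v5⁻¹ * zeta f1 hf1 h011 (-(lam v4))) * Tl)
          * (jA v5 * zeta f1 hf1 h011 (lam v4)) := by rw [_root_.map_inv]
      _ = ((jA v5⁻¹ * jA 1) * zeta f1 hf1 h011 (lam v5⁻¹ + -(lam v4)))
          * (jA v5 * zeta f1 hf1 h011 (lam v4)) := by rw [key]
      _ = ((jA v5⁻¹ * jA 1) * jA v5)
          * zeta f1 hf1 h011 ((lam v5⁻¹ + -(lam v4)) + lam v4) := by rw [zmul_mul]
      _ = 1 := by
          rw [hlam_inv, hlam_x5, _root_.map_one,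
            show (-(0:QZ) + -(lam v4)) + lam v4 = 0 from by abel, zeta_zero, mul_one,
            show (jA v5⁻¹ * 1) * jA v5 = jA v5⁻¹ * jA v5 from by group,
            ← _root_.map_mul, inv_mul_cancel, _root_.map_one]
  -- all relators are satisfied
  have hrels : ∀ r ∈ rels p, FreeGroup.lift Y r = 1 := by
    intro r hr
    simp only [rels, Set.mem_insert_iff, Set.mem_singleton_iff] at hr
    rcases hr with rfl|rfl|rfl|rfl|rfl|rfl|rfl|rfl|rfl|rfl|rfl|rfl|rfl|rfl|rfl|rfl|rfl|rfl|rfl|rfl|rfl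
    · simp only [c, _root_.map_mul, _root_.map_inv, FreeGroup.lift_apply_of]
      rw [hY1, hY2, hYa]
      exact hcase_conj v1 v2 d1 (R1 p)
    · simp only [c, _root_.map_mul, _root_.map_inv, FreeGroup.lift_apply_of]
      rw [hY2, hY3, hYa]
      exact hcase_conj v2 v3 (lam v1) (R2 p)
    · simp only [c, _root_.map_mul, _root_.map_inv, FreeGroup.lift_apply_of]
      rw [hY3, hY4, hYa]
      exact hcase_conj v3 v4 (lam v2) (R3 p)
    · simp only [c, _root_.map_mul, _root_.map_inv, FreeGroup.lift_apply_of]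
      rw [hY4, hY5, hYa]
      exact hcase_conj v4 v5 (lam v3) (R4 p)
    · simp only [c, _root_.map_mul, _root_.map_inv, FreeGroup.lift_apply_of]
      rw [hY5, hYa]
      exact hconj5
    · simp only [c, _root_.map_mul, _root_.map_inv, FreeGroup.lift_apply_of]
      rw [hY1, hY2]
      exact hcase_comm v1 v2 d1 (lam v1)
    · simp only [c, _root_.map_mul, _root_.map_inv, FreeGroup.lift_apply_of]
      rw [hY1, hY3]
      exact hcase_comm v1 v3 d1 (lam v2)
    · simp only [c, _root_.map_mul, _root_.map_inv, FreeGroup.lift_apply_of]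
      rw [hY1, hY4]
      exact hcase_comm v1 v4 d1 (lam v3)
    · simp only [c, _root_.map_mul, _root_.map_inv, FreeGroup.lift_apply_of]
      rw [hY1, hY5]
      exact hcase_comm v1 v5 d1 (lam v4)
    · simp only [c, _root_.map_mul, _root_.map_inv, FreeGroup.lift_apply_of]
      rw [hY2, hY3]
      exact hcase_comm v2 v3 (lam v1) (lam v2)
    · simp only [c, _root_.map_mul, _root_.map_inv, FreeGroup.lift_apply_of]
      rw [hY2, hY4]
      exact hcase_comm v2 v4 (lam v1) (lam v3)
    · simp only [c, _root_.map_mul, _root_.map_inv, FreeGroup.lift_apply_of]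
      rw [hY2, hY5]
      exact hcase_comm v2 v5 (lam v1) (lam v4)
    · simp only [c, _root_.map_mul, _root_.map_inv, FreeGroup.lift_apply_of]
      rw [hY3, hY4]
      exact hcase_comm v3 v4 (lam v2) (lam v3)
    · simp only [c, _root_.map_mul, _root_.map_inv, FreeGroup.lift_apply_of]
      rw [hY3, hY5]
      exact hcase_comm v3 v5 (lam v2) (lam v4)
    · simp only [c, _root_.map_mul, _root_.map_inv, FreeGroup.lift_apply_of]
      rw [hY4, hY5]
      exact hcase_comm v4 v5 (lam v3) (lam v4)
    · simp only [_root_.map_pow, FreeGroup.lift_apply_of]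
      rw [hYa]
      exact hTp
    · simp only [_root_.map_mul, _root_.map_pow, FreeGroup.lift_apply_of]
      rw [hY1, hY2, hY3, hY4, hY5]
      rw [zmul_pow, zmul_pow, zmul_pow, zmul_pow, zmul_pow,
        zmul_mul, zmul_mul, zmul_mul, zmul_mul]
      rw [← _root_.map_pow, ← _root_.map_pow, ← _root_.map_pow, ← _root_.map_pow,
        ← _root_.map_pow, ← _root_.map_mul, ← _root_.map_mul, ← _root_.map_mul,
        ← _root_.map_mul]
      rw [hw1, _root_.map_one, one_mul]
      rw [show p • d1 + (p.choose 2) • lam v1 + (p.choose 3) • lam v2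
          + (p.choose 4) • lam v3 + (p.choose 5) • lam v4 = 0 from by rw [hd1]; abel,
        zeta_zero]
    · simp only [_root_.map_mul, _root_.map_pow, FreeGroup.lift_apply_of]
      rw [hY2, hY3, hY4, hY5]
      rw [zmul_pow, zmul_pow, zmul_pow, zmul_pow, zmul_mul, zmul_mul, zmul_mul]
      rw [← _root_.map_pow, ← _root_.map_pow, ← _root_.map_pow, ← _root_.map_pow,
        ← _root_.map_mul, ← _root_.map_mul, ← _root_.map_mul]
      rw [hw2, _root_.map_one, one_mul]
      rw [show p • lam v1 + (p.choose 2) • lam v2 + (p.choose 3) • lam v3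
          + (p.choose 4) • lam v4 = 0 from hE1', zeta_zero]
    · simp only [_root_.map_mul, _root_.map_pow, FreeGroup.lift_apply_of]
      rw [hY3, hY4, hY5]
      rw [zmul_pow, zmul_pow, zmul_pow, zmul_mul, zmul_mul]
      rw [← _root_.map_pow, ← _root_.map_pow, ← _root_.map_pow,
        ← _root_.map_mul, ← _root_.map_mul]
      rw [hw3, _root_.map_one, one_mul]
      rw [show p • lam v2 + (p.choose 2) • lam v3 + (p.choose 3) • lam v4 = 0 from hE2',
        zeta_zero]
    · simp only [_root_.map_mul, _root_.map_pow, FreeGroup.lift_apply_of]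
      rw [hY4, hY5]
      rw [zmul_pow, zmul_pow, zmul_mul]
      rw [← _root_.map_pow, ← _root_.map_pow, ← _root_.map_mul]
      rw [hw4, _root_.map_one, one_mul]
      rw [show p • lam v3 + (p.choose 2) • lam v4 = 0 from hE3', zeta_zero]
    · simp only [_root_.map_pow, FreeGroup.lift_apply_of]
      rw [hY5]
      rw [zmul_pow, ← _root_.map_pow, hw5, _root_.map_one, one_mul]
      rw [show p • lam v4 = 0 from hE4', zeta_zero]
  -- the splitting and the conclusion
  set rho : PresentedGroup (rels p) →* Ext f1 hf1 h011 := PresentedGroup.toGroup hrels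
    with hrho
  have hcomp : (piE f1 hf1 h011).comp rho = MonoidHom.id (PresentedGroup (rels p)) := by
    apply PresentedGroup.ext
    intro x
    have hof : ((piE f1 hf1 h011).comp rho) (PresentedGroup.of x) = (Y x).g := by
      rw [hrho]
      simp [PresentedGroup.toGroup.of]
    rw [hof]
    show (Y x).g = PresentedGroup.of x
    cases x with
    | a => rw [hYa]; exact hTlg
    | a1 => rw [hY1]; simp only [Ext.mul_g, hjA_apply, Ext.g_mk, zeta_g, mul_one]; rfl
    | a2 => rw [hY2]; simp only [Ext.mul_g, hjA_apply, Ext.g_mk, zeta_g, mul_one]; rfl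
    | a3 => rw [hY3]; simp only [Ext.mul_g, hjA_apply, Ext.g_mk, zeta_g, mul_one]; rfl
    | a4 => rw [hY4]; simp only [Ext.mul_g, hjA_apply, Ext.g_mk, zeta_g, mul_one]; rfl
    | a5 => rw [hY5]; simp only [Ext.mul_g, hjA_apply, Ext.g_mk, zeta_g, mul_one]; rfl
  have hρg : ∀ x : PresentedGroup (rels p), (rho x).g = x := by
    intro x
    calc (rho x).g = ((piE f1 hf1 h011).comp rho) x := rfl
      _ = x := by rw [hcomp]; rfl
  exact coboundary_of_section rho hρg

end Pmain


theorem bogomolov_trivial_Phi35 (p : ℕ) (hp : p.Prime) (h3 : 3 < p)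
    (hcard : Nat.card (PresentedGroup (rels p)) = p ^ 6) :
    BogomolovMultiplierIsTrivial (PresentedGroup (rels p)) :=
  main_aux p hp.ne_zero

end Stmt11
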